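/- If f : ℝⁿ → ℝ is additive and x ↦ exp(i·f(x)) is Lebesgue measurable on some compact parallelepiped generated by a basis of ℝⁿ, then there exists c ∈ ℝⁿ such that f(x) = ⟨c, x⟩ for all x ∈ ℝⁿ. -/

import Mathlib

open Real

lemma cos_interval {θ ε : ℝ} (hε0 : 0 < ε) (hεπ : ε < π) (h1 : ε ≤ θ) (h2 : θ ≤ 2*π - ε) :
    Real.cos θ ≤ Real.cos ε := by
  rcases le_or_gt θ π with hθ | hθ
  · exact Real.cos_le_cos_of_nonneg_of_le_pi hε0.le hθ h1
  · have : Real.cos (2*π - θ) ≤ Real.cos ε := by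
      apply Real.cos_le_cos_of_nonneg_of_le_pi hε0.le (by linarith) (by linarith)
    rwa [Real.cos_two_pi_sub] at this

lemma cos_claim {s ε : ℝ} (hε0 : 0 < ε) (hεπ : ε < π)
    (h : ∀ q : ℚ, (q:ℝ) ∈ Set.Icc (0:ℝ) 1 → Real.cos ((q:ℝ) * s) > Real.cos ε) :
    |s| ≤ ε := by
  by_contra hc
  push_neg at hc
  have hs : 0 < |s| := lt_trans hε0 hc
  have h1 : ε / |s| < 1 := (div_lt_one hs).2 hc
  have h2 : ε / |s| < (2 * π - ε) / |s| := by
    apply div_lt_div_of_pos_right ?_ hs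
    linarith
  obtain ⟨q, hq1, hq2⟩ := exists_rat_btwn (lt_min h1 h2)
  have hq0 : (0:ℝ) < q := lt_trans (div_pos hε0 hs) hq1
  have hq1' : (q:ℝ) ≤ 1 := le_of_lt (lt_of_lt_of_le hq2 (min_le_left _ _))
  have hcos := h q ⟨hq0.le, hq1'⟩
  have hqs : Real.cos ((q:ℝ) * s) = Real.cos ((q:ℝ) * |s|) := by
    rcases abs_cases s with ⟨he, _⟩ | ⟨he, _⟩
    · rw [he]
    · rw [he, mul_neg, Real.cos_neg]
  have hθ1 : ε ≤ (q:ℝ) * |s| := by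
    rw [div_lt_iff₀ hs] at hq1; linarith
  have hθ2 : (q:ℝ) * |s| ≤ 2*π - ε := by
    have := lt_of_lt_of_le hq2 (min_le_right _ _)
    rw [lt_div_iff₀ hs] at this
    linarith
  have := cos_interval hε0 hεπ hθ1 hθ2
  rw [hqs] at hcos
  linarith
open Real Filter Topology

variable {V : Type*} [NormedAddCommGroup V] [NormedSpace ℝ V]

lemma f_tendsto_zero {f : V → ℝ} (hf : ∀ x y, f (x + y) = f x + f y)
    (hE : Tendsto (fun x => Complex.exp (Complex.I * (f x : ℂ))) (𝓝 0) (𝓝 1)) :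
    Tendsto f (𝓝 0) (𝓝 0) := by
  set F : V →+ ℝ := AddMonoidHom.mk' f hf with hF
  have hq : ∀ (q : ℚ) (x : V), f ((q:ℝ) • x) = (q:ℝ) * f x := by
    intro q x
    have := map_ratCast_smul F ℝ ℝ q x
    exact this
  rw [Metric.tendsto_nhds]
  intro ε' hε'
  set ε := min (ε'/2) (π/2) with hεdef
  have hε0 : 0 < ε := lt_min (by linarith) (by positivity)
  have hεπ : ε < π := lt_of_le_of_lt (min_le_right _ _) (by linarith [Real.pi_pos])
  have hεε' : ε < ε' := lt_of_le_of_lt (min_le_left _ _) (by linarith)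
  have hcos1 : Real.cos ε < 1 := by
    have := Real.cos_lt_cos_of_nonneg_of_le_pi le_rfl hεπ.le hε0
    simpa using this
  -- cos (f x) tends to 1
  have hRe : Tendsto (fun x => Real.cos (f x)) (𝓝 (0:V)) (𝓝 1) := by
    have : Tendsto (fun x => (Complex.exp (Complex.I * (f x : ℂ))).re) (𝓝 (0:V)) (𝓝 1) := by
      simpa [Function.comp_def] using (Complex.continuous_re.tendsto 1).comp hE
    convert this using 2 with x
    rw [mul_comm, Complex.exp_ofReal_mul_I_re]
  have hev : ∀ᶠ x in 𝓝 (0:V), Real.cos (f x) > Real.cos ε :=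
    hRe.eventually_const_lt hcos1
  rw [Metric.eventually_nhds_iff_ball] at hev
  obtain ⟨δ, hδ0, hδ⟩ := hev
  rw [Metric.eventually_nhds_iff_ball]
  refine ⟨δ, hδ0, fun x hx => ?_⟩
  have key : |f x| ≤ ε := by
    apply cos_claim hε0 hεπ
    intro q hqmem
    rw [← hq]
    apply hδ
    simp only [Metric.mem_ball, dist_zero_right] at hx ⊢
    calc ‖(q:ℝ) • x‖ = |(q:ℝ)| * ‖x‖ := by rw [norm_smul, Real.norm_eq_abs]
      _ ≤ 1 * ‖x‖ := by
          apply mul_le_mul_of_nonneg_right _ (norm_nonneg x)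
          rw [abs_le]; exact ⟨by linarith [hqmem.1], hqmem.2⟩
      _ < δ := by linarith
  rw [Real.dist_eq, sub_zero]
  linarith
open MeasureTheory Set

lemma global_meas (n : ℕ) (f : EuclideanSpace ℝ (Fin n) → ℝ)
    (hf : ∀ x y, f (x + y) = f x + f y)
    (b : Module.Basis (Fin n) ℝ (EuclideanSpace ℝ (Fin n)))
    (hmeas : AEMeasurable (fun x => Complex.exp (Complex.I * (f x : ℂ)))
      (volume.restrict (parallelepiped ⇑b))) :
    AEMeasurable (fun x => Complex.exp (Complex.I * (f x : ℂ))) volume := by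
  have hSmeas : MeasurableSet (parallelepiped ⇑b) := by
    rw [← b.coe_parallelepiped]
    exact b.parallelepiped.isCompact.measurableSet
  have hEmul : ∀ x y : EuclideanSpace ℝ (Fin n),
      Complex.exp (Complex.I * (f (x + y) : ℂ))
        = Complex.exp (Complex.I * (f x : ℂ)) * Complex.exp (Complex.I * (f y : ℂ)) := by
    intro x y
    rw [← Complex.exp_add, hf x y]
    congr 1
    push_cast
    ring
  have htrans : ∀ v : EuclideanSpace ℝ (Fin n),
      AEMeasurable (fun x => Complex.exp (Complex.I * (f x : ℂ)))
        (volume.restrict ((· - v) ⁻¹' (parallelepiped ⇑b))) := by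
    intro v
    have mp : MeasurePreserving (· - v) (volume : Measure (EuclideanSpace ℝ (Fin n))) volume :=
      measurePreserving_sub_right volume v
    have mp' := mp.restrict_preimage hSmeas
    have h1 : AEMeasurable ((fun x => Complex.exp (Complex.I * (f x : ℂ))) ∘ (· - v))
        (volume.restrict ((· - v) ⁻¹' (parallelepiped ⇑b))) :=
      hmeas.comp_quasiMeasurePreserving mp'.quasiMeasurePreserving
    have heq : (fun x => Complex.exp (Complex.I * (f x : ℂ)))
        = fun y => Complex.exp (Complex.I * (f v : ℂ)) *
            ((fun x => Complex.exp (Complex.I * (f x : ℂ))) ∘ (· - v)) y := by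
      funext y
      simp only [Function.comp_apply]
      rw [← hEmul v (y - v), add_sub_cancel]
    rw [heq]
    exact aemeasurable_const.mul h1
  have hcover : (univ : Set (EuclideanSpace ℝ (Fin n))) = ⋃ z : Fin n → ℤ,
      ((· - (∑ i, ((z i : ℝ)) • b i)) ⁻¹' (parallelepiped ⇑b)) := by
    apply Set.eq_of_subset_of_subset _ (subset_univ _)
    intro x _
    rw [mem_iUnion]
    refine ⟨fun i => ⌊b.repr x i⌋, ?_⟩
    simp only [mem_preimage, parallelepiped_basis_eq]
    intro i
    rw [map_sub]
    simp only [b.repr_sum_self, Finsupp.coe_sub, Pi.sub_apply]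
    have h1 := Int.fract_nonneg (b.repr x i)
    have h2 := Int.fract_lt_one (b.repr x i)
    rw [Int.fract] at h1 h2
    constructor <;> [linarith [h1]; linarith [h2]]
  have hres : volume.restrict (univ : Set (EuclideanSpace ℝ (Fin n))) = volume :=
    Measure.restrict_univ
  rw [← hres, hcover]
  exact aemeasurable_iUnion_iff.mpr (fun z => htrans _)
open MeasureTheory Set Filter Topology
open scoped symmDiff

variable {n : ℕ}

lemma E_cont (f : EuclideanSpace ℝ (Fin n) → ℝ)
    (hf : ∀ x y, f (x + y) = f x + f y)
    (hmeasG : AEMeasurable (fun x => Complex.exp (Complex.I * (f x : ℂ))) volume) :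
    Tendsto (fun x => Complex.exp (Complex.I * (f x : ℂ))) (𝓝 0) (𝓝 1) := by
  set E : EuclideanSpace ℝ (Fin n) → ℂ := fun x => Complex.exp (Complex.I * (f x : ℂ)) with hE
  have hnorm : ∀ x, ‖E x‖ = 1 := by
    intro x
    simp [hE, Complex.norm_exp]
  have hEmul : ∀ x y, E (x + y) = E x * E y := by
    intro x y
    simp only [hE, ← Complex.exp_add, hf x y]
    congr 1
    push_cast
    ring
  have hf0 : f 0 = 0 := by have := hf 0 0; simpa using this
  have hE0 : E 0 = 1 := by simp [hE, hf0]
  -- measurable representative bounded by 1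
  obtain ⟨g₀, hg₀m, hg₀e⟩ := hmeasG
  set g : EuclideanSpace ℝ (Fin n) → ℂ := fun x => if ‖g₀ x‖ ≤ 1 then g₀ x else 0 with hg
  have hgm : Measurable g := by
    apply Measurable.ite _ hg₀m measurable_const
    exact measurableSet_le hg₀m.norm measurable_const
  have hgb : ∀ x, ‖g x‖ ≤ 1 := by
    intro x
    rw [hg]
    dsimp only
    split_ifs with h
    · exact h
    · simp
  have hge : E =ᵐ[volume] g := by
    filter_upwards [hg₀e] with x hx
    have h1 : ‖g₀ x‖ ≤ 1 := by rw [← hx, hnorm]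
    rw [hg]
    dsimp only
    rw [if_pos h1, hx]
  -- find a set T with finite measure and nonzero integral of g
  classical
  set B : Set (EuclideanSpace ℝ (Fin n)) := Metric.closedBall 0 1 with hB
  have hBmeas : MeasurableSet B := measurableSet_closedBall
  have hBfin : volume B ≠ ⊤ := measure_closedBall_lt_top.ne
  have hBpos : 0 < volume B := Metric.measure_closedBall_pos volume 0 one_pos
  have hint : Integrable (B.indicator g) volume := by
    rw [integrable_indicator_iff hBmeas]
    exact Measure.integrableOn_of_bounded hBfin hgm.aestronglyMeasurable (ae_of_all _ hgb)
  have hne : ¬ (B.indicator g =ᵐ[volume] 0) := by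
    intro hcontra
    have hae2 : ∀ᵐ x ∂volume, B.indicator g x = 0 ∧ E x = g x := hcontra.and hge
    have : ∃ x ∈ B, B.indicator g x = 0 ∧ E x = g x := by
      by_contra hno
      push_neg at hno
      have hsub : B ⊆ {x | ¬ (B.indicator g x = 0 ∧ E x = g x)} := by
        intro x hx hx2
        exact (hno x hx hx2.1) hx2.2
      have : volume B = 0 := measure_mono_null hsub hae2
      exact hBpos.ne' this
    obtain ⟨x, hxB, hx0, hxE⟩ := this
    rw [Set.indicator_of_mem hxB] at hx0
    have := hnorm x
    rw [hxE, hx0] at this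
    simp at this
  have hTex : ∃ T₀ : Set (EuclideanSpace ℝ (Fin n)), MeasurableSet T₀ ∧ volume T₀ < ⊤ ∧
      (∫ x in T₀, B.indicator g x ∂volume) ≠ 0 := by
    by_contra hno
    push_neg at hno
    exact hne (hint.ae_eq_zero_of_forall_setIntegral_eq_zero
      (fun s hs hsfin => hno s hs hsfin))
  obtain ⟨T₀, hT₀meas, hT₀fin, hT₀⟩ := hTex
  set T : Set (EuclideanSpace ℝ (Fin n)) := T₀ ∩ B with hT
  have hTmeas : MeasurableSet T := hT₀meas.inter hBmeas
  have hTfin : volume T ≠ ⊤ := (lt_of_le_of_lt (measure_mono Set.inter_subset_left) hT₀fin).ne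
  set J : ℂ := ∫ y in T, g y ∂volume with hJ
  have hJne : J ≠ 0 := by
    rw [hJ, hT, ← setIntegral_indicator hBmeas]
    exact hT₀
  -- key identity  φ x = E x * J
  set A : EuclideanSpace ℝ (Fin n) → Set (EuclideanSpace ℝ (Fin n)) :=
    fun x => (· - x) ⁻¹' T with hA
  have hAmeas : ∀ x, MeasurableSet (A x) := fun x =>
    (measurable_sub_const x) hTmeas
  have hAvol : ∀ x, volume (A x) = volume T := fun x =>
    (measurePreserving_sub_right volume x).measure_preimage hTmeas.nullMeasurableSet
  have hge' : ∀ s : Set (EuclideanSpace ℝ (Fin n)),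
      (∫ u in s, E u ∂volume) = ∫ u in s, g u ∂volume := fun s =>
    integral_congr_ae (ae_restrict_of_ae hge)
  have hkey : ∀ x, (∫ u in A x, g u ∂volume) = E x * J := by
    intro x
    have h1 : (∫ u in A x, E u ∂volume) = ∫ y in T, E (x + y) ∂volume := by
      have mp' := (measurePreserving_sub_right volume x).restrict_preimage
        (s := T) hTmeas
      have emb := (MeasurableEquiv.subRight x).measurableEmbedding
      have := mp'.integral_comp emb (fun y => E (x + y))
      simp only [MeasurableEquiv.subRight] at emb
      rw [← this]
      apply integral_congr_ae
      apply ae_of_all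
      intro u
      simp [add_sub_cancel]
    have h2 : (∫ y in T, E (x + y) ∂volume) = E x * J := by
      simp_rw [hEmul x]
      rw [integral_const_mul, hge' T]
    rw [← hge', h1, h2]
  -- continuity of φ at 0
  have hbound : ∀ x, ‖(∫ u in A x, g u ∂volume) - J‖
      ≤ (volume ((A x) ∆ T)).toReal := by
    intro x
    have hAint : Integrable ((A x).indicator g) volume := by
      rw [integrable_indicator_iff (hAmeas x)]
      exact Measure.integrableOn_of_bounded (by rw [hAvol x]; exact hTfin)
        hgm.aestronglyMeasurable (ae_of_all _ hgb)
    have hTint : Integrable (T.indicator g) volume := by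
      rw [integrable_indicator_iff hTmeas]
      exact Measure.integrableOn_of_bounded hTfin hgm.aestronglyMeasurable (ae_of_all _ hgb)
    have hdiff : (∫ u in A x, g u ∂volume) - J
        = ∫ u, ((A x).indicator g u - T.indicator g u) ∂volume := by
      rw [integral_sub hAint hTint, integral_indicator (hAmeas x), integral_indicator hTmeas]
    rw [hdiff]
    have hptwise : ∀ u, ‖(A x).indicator g u - T.indicator g u‖
        ≤ ((A x) ∆ T).indicator (fun _ => (1:ℝ)) u := by
      intro u
      by_cases h1 : u ∈ A x <;> by_cases h2 : u ∈ T
      · simp only [Set.indicator_of_mem h1, Set.indicator_of_mem h2, sub_self, norm_zero]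
        exact Set.indicator_nonneg (fun _ _ => zero_le_one) u
      · rw [Set.indicator_of_mem h1, Set.indicator_of_notMem h2, sub_zero,
          Set.indicator_of_mem (Set.mem_symmDiff.2 (Or.inl ⟨h1, h2⟩))]
        exact hgb u
      · rw [Set.indicator_of_notMem h1, Set.indicator_of_mem h2, zero_sub, norm_neg,
          Set.indicator_of_mem (Set.mem_symmDiff.2 (Or.inr ⟨h2, h1⟩))]
        exact hgb u
      · rw [Set.indicator_of_notMem h1, Set.indicator_of_notMem h2, sub_self,
          Set.indicator_of_notMem (fun hc => by
            rcases Set.mem_symmDiff.1 hc with ⟨h,_⟩|⟨h,_⟩ <;> tauto)]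
        simp
    have hsd : MeasurableSet ((A x) ∆ T) := (hAmeas x).symmDiff hTmeas
    have hsdfin : volume ((A x) ∆ T) ≠ ⊤ := by
      apply ne_top_of_le_ne_top _ ((measure_mono symmDiff_subset_union).trans
        (measure_union_le (A x) T))
      rw [hAvol x]
      exact (ENNReal.add_lt_top.2 ⟨hTfin.lt_top, hTfin.lt_top⟩).ne
    calc ‖∫ u, ((A x).indicator g u - T.indicator g u) ∂volume‖
        ≤ ∫ u, ((A x) ∆ T).indicator (fun _ => (1:ℝ)) u ∂volume := by
          apply norm_integral_le_of_norm_le _ (ae_of_all _ hptwise)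
          rw [integrable_indicator_iff hsd]
          exact Measure.integrableOn_of_bounded (M := 1) hsdfin
            aestronglyMeasurable_const (ae_of_all _ (fun _ => by norm_num))
      _ = (volume ((A x) ∆ T)).toReal := by
          rw [integral_indicator_const _ hsd]
          simp
          rfl
  -- symmDiff measure tendsto
  have hcm : Continuous (fun p : (EuclideanSpace ℝ (Fin n)) × (EuclideanSpace ℝ (Fin n)) =>
      p.2 - p.1) := by fun_prop
  set cm : C((EuclideanSpace ℝ (Fin n)) × (EuclideanSpace ℝ (Fin n)), EuclideanSpace ℝ (Fin n)) :=
    ⟨_, hcm⟩ with hcmdef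
  have hcoe : ∀ x, ⇑(cm.curry x) = fun y => y - x := fun x => rfl
  have hpre : ∀ x, (cm.curry x) ⁻¹' T = A x := fun x => rfl
  have hA0 : A 0 = T := by ext y; simp [hA]
  have hpre0 : (cm.curry 0) ⁻¹' T = T := by
    rw [hcoe 0]
    ext y
    simp
  have hmp : ∀ x : EuclideanSpace ℝ (Fin n),
      MeasurePreserving (cm.curry x) (volume : Measure (EuclideanSpace ℝ (Fin n))) volume := by
    intro x
    rw [hcoe x]
    exact measurePreserving_sub_right volume x
  have hsdt : Tendsto (fun x => volume (((cm.curry x) ⁻¹' T) ∆ ((cm.curry 0) ⁻¹' T)))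
      (𝓝 0) (𝓝 0) := by
    apply tendsto_measure_symmDiff_preimage_nhds_zero
      ((cm.curry.continuous.tendsto 0)) (Eventually.of_forall hmp) (hmp 0)
      hTmeas.nullMeasurableSet hTfin
  simp only [hpre, hA0] at hsdt
  have htoReal : Tendsto (fun x => (volume ((A x) ∆ T)).toReal) (𝓝 0) (𝓝 0) := by
    have := (ENNReal.tendsto_toReal (a := 0) (by simp)).comp hsdt
    simpa [Function.comp_def] using this
  have hφ : Tendsto (fun x => ∫ u in A x, g u ∂volume) (𝓝 0) (𝓝 J) := by
    rw [tendsto_iff_norm_sub_tendsto_zero]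
    exact squeeze_zero (fun x => norm_nonneg _) hbound htoReal
  have hφ' : Tendsto (fun x => E x * J) (𝓝 0) (𝓝 J) := by
    have : (fun x => ∫ u in A x, g u ∂volume) = fun x => E x * J := funext hkey
    rwa [this] at hφ
  have hfinal : Tendsto (fun x => (E x * J) * J⁻¹) (𝓝 0) (𝓝 (J * J⁻¹)) :=
    hφ'.mul tendsto_const_nhds
  rw [mul_inv_cancel₀ hJne] at hfinal
  have : (fun x => (E x * J) * J⁻¹) = E := by
    funext x
    field_simp
  rwa [this] at hfinal
open MeasureTheory Filter Topology

theorem stmt_8 (n : ℕ) (f : EuclideanSpace ℝ (Fin n) → ℝ)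
    (hf : ∀ x y, f (x + y) = f x + f y)
    (b : Module.Basis (Fin n) ℝ (EuclideanSpace ℝ (Fin n)))
    (hmeas : AEMeasurable (fun x => Complex.exp (Complex.I * (f x : ℂ)))
      (volume.restrict (parallelepiped ⇑b))) :
    ∃ c : EuclideanSpace ℝ (Fin n), ∀ x, f x = inner ℝ c x := by
  have hglobal := global_meas n f hf b hmeas
  have hEt := E_cont f hf hglobal
  have hft : Tendsto f (𝓝 0) (𝓝 0) := f_tendsto_zero hf hEt
  have hf0 : f 0 = 0 := by have := hf 0 0; simpa using this
  have hcont : Continuous f := by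
    rw [continuous_iff_continuousAt]
    intro x
    have heq : ∀ y, f y = f x + f (y - x) := by
      intro y
      rw [← hf, add_sub_cancel]
    have h1 : Tendsto (fun y => f x + f (y - x)) (𝓝 x) (𝓝 (f x + 0)) := by
      apply tendsto_const_nhds.add
      exact hft.comp ((continuous_id.sub continuous_const).tendsto' x 0 (by simp))
    rw [ContinuousAt]
    simp only [← heq] at h1
    simpa using h1
  set F : EuclideanSpace ℝ (Fin n) →+ ℝ := AddMonoidHom.mk' f hf with hF
  set L := F.toRealLinearMap hcont with hL
  refine ⟨(InnerProductSpace.toDual ℝ (EuclideanSpace ℝ (Fin n))).symm L, fun x => ?_⟩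
  rw [InnerProductSpace.toDual_symm_apply]
  rfl
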